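/- Let Q be a 2×2 real matrix with positive entries and positive determinant, and let k ≥ 1 be an integer. Then the equation R = ((Q₁₁ R + Q₁₂)/(Q₂₁ R + Q₂₂))^k has at most 3 nonnegative real solutions R. -/

import Mathlib

open Set

/-- Rolle wrapper for globally differentiable functions. -/
lemma rolle_zero {p p1 : ℝ → ℝ} (hd : ∀ x, HasDerivAt p (p1 x) x)
    {a b : ℝ} (hab : a < b) (ha : p a = 0) (hb : p b = 0) :
    ∃ c ∈ Ioo a b, p1 c = 0 := by
  refine exists_hasDerivAt_eq_zero hab ?_ (ha.trans hb.symm) fun x _ => hd x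
  exact fun x _ => (hd x).continuousAt.continuousWithinAt

/-- Extract four increasing elements from a finset of cardinality ≥ 4. -/
lemma four_elts {T : Finset ℝ} (h : 4 ≤ T.card) :
    ∃ a ∈ T, ∃ b ∈ T, ∃ c ∈ T, ∃ d ∈ T, a < b ∧ b < c ∧ c < d := by
  classical
  set l := T.sort (· ≤ ·) with hl
  have hlen : 4 ≤ l.length := by rw [hl, Finset.length_sort]; exact h
  have hsorted : l.SortedLT := T.sortedLT_sort
  have hmem : ∀ i : Fin l.length, l.get i ∈ T := fun i =>
    (Finset.mem_sort (α := ℝ) (· ≤ ·)).1 (List.get_mem l i)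
  have hmono := hsorted.strictMono_get
  refine ⟨l.get ⟨0, by omega⟩, hmem _, l.get ⟨1, by omega⟩, hmem _,
    l.get ⟨2, by omega⟩, hmem _, l.get ⟨3, by omega⟩, hmem _, ?_, ?_, ?_⟩ <;>
    exact hmono (by simp [Fin.lt_def])

theorem stmt_12 (Q : Matrix (Fin 2) (Fin 2) ℝ) (hpos : ∀ i j, 0 < Q i j)
    (hdet : 0 < Q.det) (k : ℕ) (hk : 1 ≤ k) (s : Finset ℝ)
    (hs : ∀ R ∈ s, 0 ≤ R ∧ R = ((Q 0 0 * R + Q 0 1) / (Q 1 0 * R + Q 1 1)) ^ k) :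
    s.card ≤ 3 := by
  classical
  set A := Q 1 0 with hA
  set B := Q 0 0 with hB
  set C := Q 1 1 with hC
  set D := Q 0 1 with hD
  have hApos : 0 < A := hpos 1 0
  have hBpos : 0 < B := hpos 0 0
  have hCpos : 0 < C := hpos 1 1
  have hDpos : 0 < D := hpos 0 1
  -- the polynomial and its first two derivatives
  set p : ℝ → ℝ := fun x => A * x ^ (k + 1) - B * x ^ k + C * x - D with hp
  set p1 : ℝ → ℝ := fun x => A * ((k + 1) * x ^ k) - B * (k * x ^ (k - 1)) + C with hp1
  set p2 : ℝ → ℝ := fun x =>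
    A * (((k : ℝ) + 1) * ((k : ℝ) * x ^ (k - 1))) -
      B * ((k : ℝ) * (((k - 1 : ℕ) : ℝ) * x ^ (k - 2))) with hp2
  have hder : ∀ x : ℝ, HasDerivAt p (p1 x) x := by
    intro x
    have h1 : HasDerivAt (fun y : ℝ => y ^ (k + 1)) ((k + 1) * x ^ k) x := by
      simpa using hasDerivAt_pow (k + 1) x
    have h2 : HasDerivAt (fun y : ℝ => y ^ k) (k * x ^ (k - 1)) x := hasDerivAt_pow k x
    have h3 : HasDerivAt (fun y : ℝ => C * y) (C * 1) x := (hasDerivAt_id x).const_mul C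
    have H := (((h1.const_mul A).sub (h2.const_mul B)).add h3).sub_const D
    simpa [hp, hp1] using H
  have hder1 : ∀ x : ℝ, HasDerivAt p1 (p2 x) x := by
    intro x
    have h1 : HasDerivAt (fun y : ℝ => y ^ k) (k * x ^ (k - 1)) x := hasDerivAt_pow k x
    have h2 : HasDerivAt (fun y : ℝ => y ^ (k - 1)) (((k - 1 : ℕ) : ℝ) * x ^ (k - 2)) x := by
      have := hasDerivAt_pow (k - 1) x
      have hkk : k - 1 - 1 = k - 2 := by omega
      simpa [hkk] using this
    have H := (((h1.const_mul ((k : ℝ) + 1)).const_mul A).sub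
        ((h2.const_mul (k : ℝ)).const_mul B)).add_const C
    simpa [hp1, hp2] using H
  -- p2 has at most one zero on (0, ∞)
  have hp2uniq : ∀ y : ℝ, 0 < y → p2 y = 0 → (k + 1 : ℝ) * A * y = (k - 1 : ℝ) * B := by
    intro y hy hzero
    rcases Nat.lt_or_ge k 2 with hk2 | hk2
    · interval_cases k
      · exfalso
        have : (2 : ℝ) * A = 0 := by simpa [hp2] using hzero
        nlinarith
    · have hk1 : k - 1 = (k - 2) + 1 := by omega
      have hexp : y ^ (k - 1) = y ^ (k - 2) * y := by rw [hk1, pow_succ]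
      have hy2 : (0 : ℝ) < y ^ (k - 2) := pow_pos hy _
      have hkpos : (0 : ℝ) < (k : ℝ) := by positivity
      have : (k : ℝ) * y ^ (k - 2) * (((k : ℝ) + 1) * A * y - ((k : ℝ) - 1) * B) = 0 := by
        have hcast : ((k - 1 : ℕ) : ℝ) = (k : ℝ) - 1 := by
          have : (1 : ℕ) ≤ k := hk; push_cast [this]; ring
        rw [hp2] at hzero
        simp only at hzero
        rw [hexp, hcast] at hzero
        linear_combination hzero
      have hne : (k : ℝ) * y ^ (k - 2) ≠ 0 := by positivity
      have := mul_eq_zero.1 this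
      rcases this with h | h
      · exact absurd h hne
      · linarith
  -- map each solution R to its "k-th root" t, a positive zero of p
  set t : ℝ → ℝ := fun R => (B * R + D) / (A * R + C) with ht
  have key : ∀ R ∈ s, 0 < t R ∧ p (t R) = 0 ∧ (t R) ^ k = R := by
    intro R hR
    obtain ⟨hR0, hReq⟩ := hs R hR
    have hden : 0 < A * R + C := by positivity
    have hnum : 0 < B * R + D := by positivity
    have htpos : 0 < t R := div_pos hnum hden
    have htk : (t R) ^ k = R := by rw [ht]; exact hReq.symm
    refine ⟨htpos, ?_, htk⟩
    have hteq : t R * (A * R + C) = B * R + D := by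
      rw [ht]; field_simp
    have : p (t R) = t R * (A * R + C) - (B * R + D) := by
      rw [hp]
      simp only
      rw [pow_succ, htk]
      ring
    rw [this, hteq, sub_self]
  -- the image finset
  set T : Finset ℝ := s.image t with hT
  have hcard : T.card = s.card := by
    rw [hT]
    apply Finset.card_image_of_injOn
    intro x hx y hy hxy
    have hx' := (key x hx).2.2
    have hy' := (key y hy).2.2
    rw [← hx', ← hy', hxy]
  rw [← hcard]
  by_contra hcon
  push_neg at hcon
  have h4 : 4 ≤ T.card := hcon
  obtain ⟨a, ha, b, hb, c, hc, d, hd, hab, hbc, hcd⟩ := four_elts h4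
  have hzero : ∀ x ∈ T, 0 < x ∧ p x = 0 := by
    intro x hx
    obtain ⟨R, hR, rfl⟩ := Finset.mem_image.1 hx
    exact ⟨(key R hR).1, (key R hR).2.1⟩
  obtain ⟨ha0, hpa⟩ := hzero a ha
  obtain ⟨_, hpb⟩ := hzero b hb
  obtain ⟨_, hpc⟩ := hzero c hc
  obtain ⟨_, hpd⟩ := hzero d hd
  obtain ⟨x1, hx1, hpx1⟩ := rolle_zero hder hab hpa hpb
  obtain ⟨x2, hx2, hpx2⟩ := rolle_zero hder hbc hpb hpc
  obtain ⟨x3, hx3, hpx3⟩ := rolle_zero hder hcd hpc hpd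
  have hx12 : x1 < x2 := lt_trans hx1.2 hx2.1
  have hx23 : x2 < x3 := lt_trans hx2.2 hx3.1
  obtain ⟨y1, hy1, hpy1⟩ := rolle_zero hder1 hx12 hpx1 hpx2
  obtain ⟨y2, hy2, hpy2⟩ := rolle_zero hder1 hx23 hpx2 hpx3
  have hy1pos : 0 < y1 := lt_trans (lt_trans ha0 hx1.1) hy1.1
  have hy2pos : 0 < y2 := lt_trans hy1pos (lt_trans hy1.2 hy2.1)
  have h1 := hp2uniq y1 hy1pos hpy1
  have h2 := hp2uniq y2 hy2pos hpy2
  have hy12 : y1 < y2 := lt_trans hy1.2 hy2.1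
  have : ((k : ℝ) + 1) * A * y1 = ((k : ℝ) + 1) * A * y2 := by rw [h1, h2]
  have hne : ((k : ℝ) + 1) * A ≠ 0 := by positivity
  have : y1 = y2 := mul_left_cancel₀ hne this
  linarith
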